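/- If S is a finite saturated set of reflections in GL(V) (V a finite-dimensional vector space over a number field k stable under complex conjugation), then the group generated by S is finite. -/

import Mathlib

open Subgroup
open scoped commutatorElement

lemma commutator_central_shift {G : Type*} [Group G] {z w : G} (hz : z ∈ Subgroup.center G)
    (hw : w ∈ Subgroup.center G) (a b : G) : ⁅a * z, b * w⁆ = ⁅a, b⁆ := by
  have hz' : ∀ x : G, z * x = x * z := fun x => (Subgroup.mem_center_iff.mp hz x).symm
  have hw' : ∀ x : G, w * x = x * w := fun x => (Subgroup.mem_center_iff.mp hw x).symm
  simp only [commutatorElement_def, mul_inv_rev]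
  calc a * z * (b * w) * (z⁻¹ * a⁻¹) * (w⁻¹ * b⁻¹)
      = a * (z * (b * w) * z⁻¹) * a⁻¹ * (w⁻¹ * b⁻¹) := by group
    _ = a * (b * w) * a⁻¹ * (w⁻¹ * b⁻¹) := by
        rw [hz' (b * w), mul_assoc (b*w) z z⁻¹, mul_inv_cancel, mul_one]
    _ = a * b * (w * a⁻¹ * w⁻¹) * b⁻¹ := by group
    _ = a * b * a⁻¹ * b⁻¹ := by
        rw [hw' a⁻¹, mul_assoc a⁻¹ w w⁻¹, mul_inv_cancel, mul_one]

lemma finite_commutatorSet_of_finite_quotient_center {G : Type*} [Group G]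
    [Finite (G ⧸ Subgroup.center G)] : Finite (commutatorSet G) := by
  have hsub : commutatorSet G ⊆ Set.range
      (fun p : (G ⧸ center G) × (G ⧸ center G) => ⁅p.1.out, p.2.out⁆) := by
    rintro x ⟨a, b, rfl⟩
    refine ⟨(QuotientGroup.mk a, QuotientGroup.mk b), ?_⟩
    obtain ⟨z, hz⟩ := QuotientGroup.mk_out_eq_mul (center G) a
    obtain ⟨w, hw⟩ := QuotientGroup.mk_out_eq_mul (center G) b
    simp only [hz, hw]
    exact commutator_central_shift z.2 w.2 a b
  exact (Set.Finite.subset (Set.finite_range _) hsub).to_subtype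

theorem finite_closure_of_saturated {G : Type*} [Group G] (S : Set G) (hS : S.Finite)
    (htor : ∀ s ∈ S, IsOfFinOrder s)
    (hsat : ∀ g ∈ Subgroup.closure S, ∀ s ∈ S, g * s * g⁻¹ ∈ S) :
    Finite (Subgroup.closure S) := by
  set H := Subgroup.closure S with hH
  haveI : Finite ↥S := hS.to_subtype
  let φ : H →* Equiv.Perm S :=
  { toFun := fun g =>
      { toFun := fun s => ⟨↑g * ↑s * (↑g)⁻¹, hsat g g.2 s s.2⟩
        invFun := fun s => ⟨(↑g)⁻¹ * ↑s * ↑g, by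
          simpa using hsat (↑g)⁻¹ (inv_mem g.2) s s.2⟩
        left_inv := fun s => by ext; simp [mul_assoc]
        right_inv := fun s => by ext; simp [mul_assoc] }
    map_one' := by ext s; simp
    map_mul' := fun g h => by ext s; simp [mul_assoc] }
  have hker : φ.ker ≤ Subgroup.center H := by
    intro g hg
    rw [Subgroup.mem_center_iff]
    intro h
    have hcent : (h : G) ∈ Subgroup.centralizer {(g : G)} := by
      have hle : H ≤ Subgroup.centralizer {(g : G)} := by
        show Subgroup.closure S ≤ _
        apply Subgroup.closure_le _ |>.mpr
        intro s hs
        have hfix : (↑g * s * (↑g)⁻¹ : G) = s := by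
          have h2 := congrArg (fun e : Equiv.Perm S => ((e ⟨s, hs⟩ : S) : G))
            (MonoidHom.mem_ker.mp hg)
          simpa [φ] using h2
        rw [SetLike.mem_coe, Subgroup.mem_centralizer_iff]
        intro m hm
        rw [Set.mem_singleton_iff] at hm
        subst hm
        have := congrArg (· * (g : G)) hfix
        simpa [mul_assoc] using this
      exact hle h.2
    have hc := Subgroup.mem_centralizer_iff.mp hcent (g : G) rfl
    exact Subtype.ext hc.symm
  haveI : Finite (H ⧸ φ.ker) := Finite.of_injective _ (QuotientGroup.kerLift_injective φ)
  haveI : Finite (H ⧸ Subgroup.center H) := by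
    have hsurj : Function.Surjective
        (QuotientGroup.map φ.ker (center H) (MonoidHom.id H) (by simpa using hker)) := by
      intro x
      obtain ⟨h, rfl⟩ := QuotientGroup.mk_surjective x
      exact ⟨QuotientGroup.mk h, rfl⟩
    exact Finite.of_surjective _ hsurj
  haveI : Finite (commutatorSet H) := finite_commutatorSet_of_finite_quotient_center
  haveI : Finite (_root_.commutator H) := inferInstance
  haveI : Group.FG H := by
    rw [Group.fg_iff]
    exact ⟨(H.subtype ⁻¹' S), Subgroup.closure_preimage_eq_top S,
      hS.preimage (Subtype.val_injective.injOn)⟩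
  have hofsurj : Function.Surjective (Abelianization.of : H →* Abelianization H) :=
    fun x => Quotient.inductionOn x fun g => ⟨g, rfl⟩
  haveI : Group.FG (Abelianization H) := Group.fg_of_surjective hofsurj
  haveI : Finite (Abelianization H) := by
    apply CommGroup.finite_of_fg_torsion
    intro x
    have hgen : Subgroup.closure (Abelianization.of '' (H.subtype ⁻¹' S)) = ⊤ := by
      rw [← MonoidHom.map_closure, Subgroup.closure_preimage_eq_top, ← MonoidHom.range_eq_map,
        MonoidHom.range_eq_top]
      exact hofsurj
    have hx : x ∈ Subgroup.closure (Abelianization.of '' (H.subtype ⁻¹' S)) := by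
      rw [hgen]; trivial
    refine Subgroup.closure_induction ?_ ?_ ?_ ?_ hx
    · rintro _ ⟨s, hs, rfl⟩
      apply MonoidHom.isOfFinOrder Abelianization.of
      have h1 : IsOfFinOrder ((s : G)) := htor _ hs
      rwa [← orderOf_pos_iff, Subgroup.orderOf_coe, orderOf_pos_iff] at h1
    · exact IsOfFinOrder.one
    · exact fun a b _ _ ha hb => (Commute.all a b).isOfFinOrder_mul ha hb
    · exact fun a _ ha => ha.inv
  haveI hfinq : Finite (H ⧸ _root_.commutator H) := ‹Finite (Abelianization H)›
  exact Finite.of_equiv _ (Subgroup.groupEquivQuotientProdSubgroup (s := _root_.commutator H)).symm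



/-- A reflection: a finite-order linear automorphism whose fixed space is a
hyperplane, i.e. whose "moved" space `im (s - 1)` is a line. -/
def IsReflection {k V : Type*} [Field k] [AddCommGroup V] [Module k V]
    (s : V ≃ₗ[k] V) : Prop :=
  IsOfFinOrder s ∧
    Module.finrank k (LinearMap.range ((s : V →ₗ[k] V) - LinearMap.id)) = 1

/-- If `S` is a finite saturated set of reflections in `GL(V)`, where `V` is a
finite-dimensional vector space over a number field `k`, then the group generated by
`S` is finite. -/
theorem stmt_11 {k V : Type*} [Field k] [NumberField k] [AddCommGroup V] [Module k V]
    [FiniteDimensional k V]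
    (S : Set (V ≃ₗ[k] V)) (hSfin : S.Finite) (hrefl : ∀ s ∈ S, IsReflection s)
    (hsat : ∀ g ∈ Subgroup.closure S, ∀ s ∈ S, g * s * g⁻¹ ∈ S) :
    Finite (Subgroup.closure S) :=
  finite_closure_of_saturated S hSfin (fun s hs => (hrefl s hs).1) hsat
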